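/- arXiv:2305.00863 — 6 statements merged into one kernel-verified Lean document; each statement's English description precedes it below -/
import Mathlib

section
/- Let Γ act minimally by homeomorphisms on a Cantor space 𝔛 and let U be a nonempty clopen adapted subset. Then the translates { g·U : g ∈ Γ } form a finite partition of 𝔛 into clopen sets, in bijection with the coset space Γ/Γ_U; in particular the stabilizer Γ_U has finite index in Γ. -/
open Pointwise

/-- For a minimal action of a group `Γ` by homeomorphisms on a Cantor space `𝔛` and a
nonempty clopen adapted subset `U`, the translates `{g • U}` form a finite partition of
`𝔛` into clopen sets, in bijection with the coset space `Γ/Γ_U`; in particular the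
stabilizer `Γ_U` has finite index in `Γ`. -/
theorem translates_finite_partition_of_adapted
    {G X : Type*} [Group G] [TopologicalSpace X] [CompactSpace X] [T2Space X]
    [TotallyDisconnectedSpace X] [PerfectSpace X] [TopologicalSpace.MetrizableSpace X]
    [Nonempty X] [MulAction G X] [ContinuousConstSMul G X]
    (hmin : ∀ x : X, Dense (MulAction.orbit G x))
    (U : Set X) (hU : IsClopen U) (hUne : U.Nonempty)
    (hadapted : ∀ g : G, (g • U ∩ U).Nonempty → g • U = U) :
    {V : Set X | ∃ g : G, V = g • U}.Finite ∧
    (∀ V ∈ {V : Set X | ∃ g : G, V = g • U}, IsClopen V) ∧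
    (⋃ g : G, g • U) = Set.univ ∧
    (∀ g g' : G, g • U = g' • U ∨ Disjoint (g • U) (g' • U)) ∧
    ∀ H : Subgroup G, (H : Set G) = {g : G | (g • U ∩ U).Nonempty} →
      H.index ≠ 0 ∧ Nonempty ((G ⧸ H) ≃ {V : Set X | ∃ g : G, V = g • U}) := by
  -- key: intersecting translates are equal
  have key : ∀ g g' : G, (g • U ∩ g' • U).Nonempty → g • U = g' • U := by
    rintro g g' ⟨x, hx1, hx2⟩
    have hmem1 : g'⁻¹ • x ∈ (g'⁻¹ * g) • U := by
      rw [mul_smul]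
      exact Set.smul_mem_smul_set hx1
    have hmem2 : g'⁻¹ • x ∈ U := by
      obtain ⟨u, hu, rfl⟩ := hx2
      simpa using hu
    have h := hadapted (g'⁻¹ * g) ⟨g'⁻¹ • x, hmem1, hmem2⟩
    rw [mul_smul] at h
    calc g • U = g' • (g'⁻¹ • (g • U)) := by rw [smul_inv_smul]
    _ = g' • U := by rw [h]
  -- cover
  have hcover : (⋃ g : G, g • U) = Set.univ := by
    ext x
    simp only [Set.mem_iUnion, Set.mem_univ, iff_true]
    have : (U ∩ MulAction.orbit G x).Nonempty :=
      (hmin x).inter_open_nonempty U hU.isOpen hUne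
    obtain ⟨y, hyU, g, rfl⟩ := this
    exact ⟨g⁻¹, by rw [Set.mem_smul_set_iff_inv_smul_mem]; simpa using hyU⟩
  -- finiteness via compactness
  obtain ⟨t, ht⟩ := IsCompact.elim_finite_subcover isCompact_univ
    (fun g : G => g • U) (fun g => hU.isOpen.smul g) (by rw [hcover])
  have hfin : {V : Set X | ∃ g : G, V = g • U}.Finite := by
    apply Set.Finite.subset (t.finite_toSet.image (fun g => g • U))
    rintro V ⟨g, rfl⟩
    obtain ⟨x, hx⟩ := hUne.smul_set (a := g)
    obtain ⟨g', hg't, hxg'⟩ := by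
      have := ht (Set.mem_univ x)
      simpa using this
    exact ⟨g', hg't, (key g' g ⟨x, hxg', hx⟩)⟩
  refine ⟨hfin, ?_, hcover, ?_, ?_⟩
  · rintro V ⟨g, rfl⟩
    exact ⟨hU.isClosed.smul g, hU.isOpen.smul g⟩
  · intro g g'
    rcases Set.eq_empty_or_nonempty (g • U ∩ g' • U) with h | h
    · exact Or.inr (Set.disjoint_iff_inter_eq_empty.mpr h)
    · exact Or.inl (key g g' h)
  · intro H hH
    have hmem : ∀ g : G, g ∈ H ↔ g • U = U := by
      intro g
      constructor
      · intro hg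
        exact hadapted g (by
          have : g ∈ (H : Set G) := hg
          rwa [hH] at this)
      · intro hg
        have : g ∈ (H : Set G) := by
          rw [hH]
          simp only [Set.mem_setOf_eq, hg, Set.inter_self]
          exact hUne
        exact this
    have hco : ∀ a b : G, (QuotientGroup.leftRel H) a b → a • U = b • U := by
      intro a b hab
      have h1 : a⁻¹ * b ∈ H := (QuotientGroup.leftRel_apply).mp hab
      have h2 := (hmem _).mp h1
      calc a • U = a • ((a⁻¹ * b) • U) := by rw [h2]
      _ = b • U := by rw [smul_smul, mul_inv_cancel_left]
    let F : G ⧸ H → {V : Set X | ∃ g : G, V = g • U} :=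
      fun q => Quotient.liftOn' q
        (fun g => (⟨g • U, g, rfl⟩ : {V : Set X | ∃ g : G, V = g • U}))
        (fun a b hab => Subtype.ext (hco a b hab))
    have hFbij : Function.Bijective F := by
      constructor
      · intro q q'
        induction q using Quotient.inductionOn'
        induction q' using Quotient.inductionOn'
        rename_i a b
        intro hab
        have h1 : a • U = b • U := congrArg Subtype.val hab
        apply Quotient.sound'
        rw [QuotientGroup.leftRel_apply, hmem]
        calc (a⁻¹ * b) • U = a⁻¹ • (b • U) := by rw [mul_smul]
        _ = a⁻¹ • (a • U) := by rw [h1]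
        _ = U := inv_smul_smul a U
      · rintro ⟨V, g, rfl⟩
        exact ⟨QuotientGroup.mk g, rfl⟩
    have e : (G ⧸ H) ≃ {V : Set X | ∃ g : G, V = g • U} := Equiv.ofBijective F hFbij
    have : Finite {V : Set X | ∃ g : G, V = g • U} := hfin.to_subtype
    have : Finite (G ⧸ H) := Finite.of_equiv _ e.symm
    exact ⟨Subgroup.index_ne_zero_of_finite, ⟨e⟩⟩
end

section
/- A minimal action of a group Γ by homeomorphisms on a Cantor space 𝔛 is equicontinuous (with respect to any compatible metric) if and only if the Γ-orbit of every clopen subset U ⊆ 𝔛 under the induced action on the collection CO(𝔛) of clopen subsets is finite. -/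
open Pointwise Metric

private lemma finite_exists_pos_thickening {X : Type*} [MetricSpace X]
    {𝒞 : Set (Set X)} (h𝒞 : 𝒞.Finite)
    (h : ∀ W ∈ 𝒞, ∃ δ : ℝ, 0 < δ ∧ thickening δ W ⊆ W) :
    ∃ δ : ℝ, 0 < δ ∧ ∀ W ∈ 𝒞, thickening δ W ⊆ W := by
  revert h
  refine Set.Finite.induction_on
    (motive := fun 𝒞 _ => (∀ W ∈ 𝒞, ∃ δ : ℝ, 0 < δ ∧ thickening δ W ⊆ W) →
      ∃ δ : ℝ, 0 < δ ∧ ∀ W ∈ 𝒞, thickening δ W ⊆ W) _ h𝒞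
    (fun _ => ⟨1, one_pos, by simp⟩) ?_
  intro W 𝒞 _ _ ih h
  obtain ⟨δ₁, hδ₁, h₁⟩ := h W (Set.mem_insert _ _)
  obtain ⟨δ₂, hδ₂, h₂⟩ := ih fun V hV => h V (Set.mem_insert_of_mem _ hV)
  refine ⟨min δ₁ δ₂, lt_min hδ₁ hδ₂, ?_⟩
  rintro V (rfl | hV)
  · exact (thickening_mono (min_le_left _ _) _).trans h₁
  · exact (thickening_mono (min_le_right _ _) _).trans (h₂ V hV)

/-- A minimal action of a group `Γ` by homeomorphisms on a Cantor space `𝔛` is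
equicontinuous with respect to a compatible metric if and only if the orbit of every
clopen subset under the induced action on clopen sets is finite. -/
theorem equicontinuous_iff_clopen_orbits_finite
    {G X : Type*} [Group G] [MetricSpace X] [CompactSpace X]
    [TotallyDisconnectedSpace X] [PerfectSpace X] [Nonempty X]
    [MulAction G X] [ContinuousConstSMul G X]
    (hmin : ∀ x : X, Dense (MulAction.orbit G x)) :
    (∀ ε : ℝ, 0 < ε → ∃ δ : ℝ, 0 < δ ∧ ∀ (g : G) (x y : X),
        dist x y < δ → dist (g • x) (g • y) < ε) ↔
      ∀ U : Set X, IsClopen U → {V : Set X | ∃ g : G, V = g • U}.Finite := by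
  constructor
  · -- equicontinuity → finite orbits
    intro hequi U hU
    obtain ⟨δ₀, hδ₀, hthick⟩ :=
      (hU.isClosed.isCompact).exists_thickening_subset_open hU.isOpen subset_rfl
    obtain ⟨δ, hδ, hd⟩ := hequi δ₀ hδ₀
    -- finite δ-net
    obtain ⟨F, hF⟩ := (isCompact_univ (X := X)).elim_finite_subcover
      (fun x : X => ball x δ) (fun x => isOpen_ball)
      (fun x _ => Set.mem_iUnion.2 ⟨x, mem_ball_self hδ⟩)
    -- key: if d(x,f) < δ and x ∈ g•U then f ∈ g•U
    have key : ∀ (g : G) (x f : X), dist x f < δ → x ∈ g • U → f ∈ g • U := by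
      intro g x f hdist hx
      rw [Set.mem_smul_set_iff_inv_smul_mem] at hx ⊢
      have := hd g⁻¹ x f hdist
      exact hthick (mem_thickening_iff.2 ⟨_, hx, by rwa [dist_comm]⟩)
    have hinj : Set.InjOn (fun V : Set X => {x ∈ (F : Set X) | x ∈ V})
        {V : Set X | ∃ g : G, V = g • U} := by
      rintro V ⟨g, rfl⟩ W ⟨h, rfl⟩ hVW
      have main : ∀ (g h : G), {x ∈ (F : Set X) | x ∈ g • U} = {x ∈ (F : Set X) | x ∈ h • U} →
          g • U ⊆ h • U := by
        intro g h hgh x hx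
        obtain ⟨f, hf⟩ := Set.mem_iUnion.1 (hF (Set.mem_univ x))
        obtain ⟨hfF, hxf⟩ := Set.mem_iUnion.1 hf
        have hfV : f ∈ g • U := key g x f hxf hx
        have hfW : f ∈ h • U := by
          have : f ∈ {x ∈ (F : Set X) | x ∈ g • U} := ⟨hfF, hfV⟩
          rw [hgh] at this
          exact this.2
        exact key h f x (by rwa [dist_comm]) hfW
      exact le_antisymm (main g h hVW) (main h g hVW.symm)
    have himg : ((fun V : Set X => {x ∈ (F : Set X) | x ∈ V}) ''
        {V : Set X | ∃ g : G, V = g • U}).Finite := by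
      apply (F : Set X).toFinite.finite_subsets.subset
      rintro T ⟨V, _, rfl⟩
      exact Set.sep_subset _ _
    exact Set.Finite.of_finite_image himg hinj
  · -- finite orbits → equicontinuity
    intro hfin ε hε
    -- cover X by clopen sets of small diameter
    have hcov : ∀ x : X, ∃ V : Set X, IsClopen V ∧ x ∈ V ∧ V ⊆ ball x (ε / 3) :=
      fun x => compact_exists_isClopen_in_isOpen isOpen_ball (mem_ball_self (by linarith))
    choose V hVclopen hVmem hVball using hcov
    obtain ⟨t, ht⟩ := (isCompact_univ (X := X)).elim_finite_subcover V
      (fun x => (hVclopen x).isOpen) (fun x _ => Set.mem_iUnion.2 ⟨x, hVmem x⟩)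
    set 𝒞 : Set (Set X) := ⋃ c ∈ t, {W : Set X | ∃ g : G, W = g • V c} with h𝒞def
    have h𝒞fin : 𝒞.Finite := Set.Finite.biUnion t.finite_toSet
      (fun c _ => hfin (V c) (hVclopen c))
    have h𝒞clopen : ∀ W ∈ 𝒞, IsClopen W := by
      rintro W hW
      simp only [h𝒞def, Set.mem_iUnion] at hW
      obtain ⟨c, _, g, rfl⟩ := hW
      exact ⟨(hVclopen c).isClosed.smul g, (hVclopen c).isOpen.smul g⟩
    obtain ⟨δ, hδ, hthick⟩ := finite_exists_pos_thickening h𝒞fin (fun W hW =>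
      ((h𝒞clopen W hW).isClosed.isCompact).exists_thickening_subset_open
        (h𝒞clopen W hW).isOpen subset_rfl)
    refine ⟨δ, hδ, fun g x y hxy => ?_⟩
    obtain ⟨c, hc⟩ := Set.mem_iUnion.1 (ht (Set.mem_univ (g • x)))
    obtain ⟨hct, hgx⟩ := Set.mem_iUnion.1 hc
    have hxW : x ∈ g⁻¹ • V c := by
      rw [Set.mem_smul_set_iff_inv_smul_mem, inv_inv]
      exact hgx
    have hW𝒞 : g⁻¹ • V c ∈ 𝒞 := by
      simp only [h𝒞def, Set.mem_iUnion]
      exact ⟨c, hct, g⁻¹, rfl⟩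
    have hyW : y ∈ g⁻¹ • V c :=
      hthick _ hW𝒞 (mem_thickening_iff.2 ⟨x, hxW, by rwa [dist_comm]⟩)
    have hgy : g • y ∈ V c := by
      rw [Set.mem_smul_set_iff_inv_smul_mem, inv_inv] at hyW
      exact hyW
    have h1 := hVball c hgx
    have h2 := hVball c hgy
    rw [mem_ball] at h1 h2
    calc dist (g • x) (g • y) ≤ dist (g • x) c + dist c (g • y) := dist_triangle _ _ _
      _ < ε / 3 + ε / 3 := by rw [dist_comm c]; exact add_lt_add h1 h2
      _ < ε := by linarith
end

section
/- Let γ be an element of a group Γ, let {C_ℓ} be a descending chain of finite-index normal subgroups, and let m ≥ 1. Then the Steinitz numbers ξ(γ) = lcm{ #(⟨γ⟩/(⟨γ⟩∩C_ℓ)) : ℓ > 0 } and ξ(γ^m) = lcm{ #(⟨γ^m⟩/(⟨γ^m⟩∩C_ℓ)) : ℓ > 0 } are asymptotically equivalent; in fact there is an integer n_∞ ≤ m with n_∞ · ξ(γ^m) = ξ(γ). -/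
/-- A Steinitz number, encoded by its characteristic function on the primes. -/
abbrev SteinitzNum := Nat.Primes → ℕ∞

/-- Asymptotic equivalence of Steinitz numbers. -/
def steinitzEquiv (χ₁ χ₂ : SteinitzNum) : Prop :=
  ∃ a a' : ℕ, 0 < a ∧ 0 < a' ∧
    ∀ p : Nat.Primes, (a.factorization p : ℕ∞) + χ₁ p = (a'.factorization p : ℕ∞) + χ₂ p

/-- The Steinitz number `lcm {f ℓ : ℓ}` of a sequence of natural numbers. -/
noncomputable def steinitzOfSeq (f : ℕ → ℕ) : SteinitzNum :=
  fun p => ⨆ ℓ : ℕ, ((f ℓ).factorization p : ℕ∞)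

/-- The Steinitz order of `γ` along a chain `{C_ℓ}`:
`ξ(γ) = lcm { #(⟨γ⟩/(⟨γ⟩ ∩ C_ℓ)) : ℓ }`. -/
noncomputable def steinitzOrder {G : Type*} [Group G] (C : ℕ → Subgroup G) (γ : G) : SteinitzNum :=
  steinitzOfSeq fun ℓ => ((C ℓ).subgroupOf (Subgroup.zpowers γ)).index

/-- The index of `⟨δ⟩ ∩ C` in `⟨δ⟩` is the order of the image of `δ` in `G ⧸ C`. -/
lemma index_subgroupOf_zpowers {G : Type*} [Group G] (C : Subgroup G) [C.Normal] (δ : G) :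
    (C.subgroupOf (Subgroup.zpowers δ)).index = orderOf (QuotientGroup.mk δ : G ⧸ C) := by
  have h := Subgroup.relIndex_ker (K := Subgroup.zpowers δ) (QuotientGroup.mk' C)
  rw [QuotientGroup.ker_mk', MonoidHom.map_zpowers, Nat.card_zpowers] at h
  exact h

/-- Shift invariance of the supremum of a monotone sequence. -/
lemma iSup_shift (f : ℕ → ℕ∞) (hf : Monotone f) (L : ℕ) :
    ⨆ ℓ, f ℓ = ⨆ ℓ, f (L + ℓ) := by
  refine le_antisymm (iSup_le fun ℓ => le_iSup_of_le ℓ (hf (Nat.le_add_left ℓ L)))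
    (iSup_le fun ℓ => le_iSup f (L + ℓ))

/-- Main computation on suprema of factorizations. -/
lemma steinitz_aux (Mf Kf : ℕ → ℕ) (N L : ℕ) (hN : N ≠ 0)
    (hMne : ∀ ℓ, Mf ℓ ≠ 0) (hKne : ∀ ℓ, Kf ℓ ≠ 0)
    (hMdvd : ∀ i j, i ≤ j → Mf i ∣ Mf j) (hKdvd : ∀ i j, i ≤ j → Kf i ∣ Kf j)
    (hfac : ∀ ℓ, L ≤ ℓ → Mf ℓ = N * Kf ℓ) (p : ℕ) :
    (N.factorization p : ℕ∞) + ⨆ ℓ, ((Kf ℓ).factorization p : ℕ∞)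
      = ⨆ ℓ, ((Mf ℓ).factorization p : ℕ∞) := by
  have hMmono : Monotone fun ℓ => ((Mf ℓ).factorization p : ℕ∞) := fun i j h =>
    Nat.cast_le.mpr ((Nat.factorization_le_iff_dvd (hMne i) (hMne j)).mpr (hMdvd i j h) p)
  have hKmono : Monotone fun ℓ => ((Kf ℓ).factorization p : ℕ∞) := fun i j h =>
    Nat.cast_le.mpr ((Nat.factorization_le_iff_dvd (hKne i) (hKne j)).mpr (hKdvd i j h) p)
  rw [iSup_shift _ hMmono L, iSup_shift _ hKmono L, ENat.add_iSup]
  refine iSup_congr fun ℓ => ?_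
  rw [hfac (L + ℓ) (Nat.le_add_right L ℓ), Nat.factorization_mul hN (hKne (L + ℓ))]
  simp

/-- For a descending chain `{C_ℓ}` of finite-index normal subgroups and `m ≥ 1`, the
Steinitz orders `ξ(γ)` and `ξ(γ^m)` are asymptotically equivalent; in fact there is an
integer `n_∞ ≤ m` with `n_∞ · ξ(γ^m) = ξ(γ)`. -/
theorem steinitzOrder_pow_equiv {G : Type*} [Group G] (γ : G) (m : ℕ) (hm : 1 ≤ m)
    (C : ℕ → Subgroup G) (hdesc : ∀ ℓ, C (ℓ + 1) ≤ C ℓ)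
    (hfin : ∀ ℓ, (C ℓ).index ≠ 0) (hnorm : ∀ ℓ, (C ℓ).Normal) :
    steinitzEquiv (steinitzOrder C γ) (steinitzOrder C (γ ^ m)) ∧
    ∃ n : ℕ, 1 ≤ n ∧ n ≤ m ∧ ∀ p : Nat.Primes,
      (n.factorization p : ℕ∞) + steinitzOrder C (γ ^ m) p = steinitzOrder C γ p := by
  classical
  have hmne : m ≠ 0 := by omega
  have hanti : Antitone C := antitone_nat_of_succ_le hdesc
  set Mf : ℕ → ℕ := fun ℓ => ((C ℓ).subgroupOf (Subgroup.zpowers γ)).index with hMf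
  set Kf : ℕ → ℕ := fun ℓ => ((C ℓ).subgroupOf (Subgroup.zpowers (γ ^ m))).index with hKf
  have hMdvd : ∀ i j, i ≤ j → Mf i ∣ Mf j := fun i j h =>
    Subgroup.relIndex_dvd_of_le_left _ (hanti h)
  have hKdvd : ∀ i j, i ≤ j → Kf i ∣ Kf j := fun i j h =>
    Subgroup.relIndex_dvd_of_le_left _ (hanti h)
  have hMne : ∀ ℓ, Mf ℓ ≠ 0 := by
    intro ℓ h0
    haveI := hnorm ℓ
    exact hfin ℓ (Nat.eq_zero_of_zero_dvd
      (h0 ▸ Subgroup.relIndex_dvd_index_of_normal (C ℓ) (Subgroup.zpowers γ)))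
  have hKne : ∀ ℓ, Kf ℓ ≠ 0 := by
    intro ℓ h0
    haveI := hnorm ℓ
    exact hfin ℓ (Nat.eq_zero_of_zero_dvd
      (h0 ▸ Subgroup.relIndex_dvd_index_of_normal (C ℓ) (Subgroup.zpowers (γ ^ m))))
  -- key identity: Mf ℓ = gcd m (Mf ℓ) * Kf ℓ
  have hkey : ∀ ℓ, Mf ℓ = Nat.gcd m (Mf ℓ) * Kf ℓ := by
    intro ℓ
    haveI := hnorm ℓ
    rw [hMf, hKf]
    simp only
    rw [index_subgroupOf_zpowers, index_subgroupOf_zpowers]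
    have hmk : (QuotientGroup.mk (γ ^ m) : G ⧸ C ℓ) = (QuotientGroup.mk γ : G ⧸ C ℓ) ^ m := rfl
    rw [hmk, orderOf_pow' _ hmne, Nat.gcd_comm m]
    exact (Nat.mul_div_cancel' (Nat.gcd_dvd_left _ _)).symm
  -- the sequence of gcds
  have hnpos : ∀ ℓ, 1 ≤ Nat.gcd m (Mf ℓ) := fun ℓ =>
    Nat.one_le_iff_ne_zero.mpr fun h => hmne (Nat.eq_zero_of_gcd_eq_zero_left h)
  have hnlem : ∀ ℓ, Nat.gcd m (Mf ℓ) ≤ m := fun ℓ => Nat.le_of_dvd hm (Nat.gcd_dvd_left _ _)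
  have hnmono : ∀ i j, i ≤ j → Nat.gcd m (Mf i) ≤ Nat.gcd m (Mf j) := fun i j h =>
    Nat.le_of_dvd (hnpos j)
      (Nat.dvd_gcd (Nat.gcd_dvd_left _ _) ((Nat.gcd_dvd_right _ _).trans (hMdvd i j h)))
  -- eventual constancy
  set P : ℕ → Prop := fun k => ∃ ℓ, k ≤ Nat.gcd m (Mf ℓ) with hP
  set N := Nat.findGreatest P m with hNdef
  have hPN : P N := Nat.findGreatest_spec (P := P) hm ⟨0, hnpos 0⟩
  obtain ⟨L, hNL⟩ := hPN
  have hub : ∀ ℓ, Nat.gcd m (Mf ℓ) ≤ N := by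
    intro ℓ
    by_contra hlt
    push_neg at hlt
    exact Nat.findGreatest_is_greatest hlt (hnlem ℓ) ⟨ℓ, le_rfl⟩
  have hNL' : Nat.gcd m (Mf L) = N := le_antisymm (hub L) hNL
  have hconst : ∀ ℓ, L ≤ ℓ → Nat.gcd m (Mf ℓ) = N :=
    fun ℓ h => le_antisymm (hub ℓ) (hNL.trans (hnmono L ℓ h))
  have hNpos : 0 < N := lt_of_lt_of_le (hnpos L) (le_of_eq hNL')
  have hNlem : N ≤ m := hNL' ▸ hnlem L
  have hfac : ∀ ℓ, L ≤ ℓ → Mf ℓ = N * Kf ℓ := fun ℓ h => (hconst ℓ h) ▸ hkey ℓ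
  have hmain : ∀ p : Nat.Primes,
      (N.factorization p : ℕ∞) + steinitzOrder C (γ ^ m) p = steinitzOrder C γ p := by
    intro p
    exact steinitz_aux Mf Kf N L (Nat.pos_iff_ne_zero.mp hNpos) hMne hKne hMdvd hKdvd hfac p
  refine ⟨⟨1, N, one_pos, hNpos, fun p => ?_⟩, ⟨N, hNpos, hNlem, hmain⟩⟩
  simp only [Nat.factorization_one, Finsupp.coe_zero, Pi.zero_apply, Nat.cast_zero, zero_add]
  exact (hmain p).symm
end

section
/- Let Γ = ℤ² ⋊ ℤ/2ℤ where the generator σ of ℤ/2ℤ acts by swapping the two ℤ-coordinates, and fix distinct primes p, q. For ℓ ≥ 0 let Γ_ℓ = { (p^ℓ k, q^ℓ m, id) : k, m ∈ ℤ }. Then the normal core of Γ_ℓ in Γ equals C_ℓ = { ((pq)^ℓ k, (pq)^ℓ m, id) : k, m ∈ ℤ }. -/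
/-- The coordinate-swap automorphism of `ℤ²` (written multiplicatively). -/
def σswap : Multiplicative (ℤ × ℤ) ≃* Multiplicative (ℤ × ℤ) :=
  AddEquiv.toMultiplicative (AddEquiv.prodComm)

lemma σswap_sq : (σswap : MulAut (Multiplicative (ℤ × ℤ))) ^ (2 : ℤ) = 1 := by
  ext x <;> rfl

/-- The action of `ℤ/2ℤ` on `ℤ²` whose generator swaps the two coordinates
(additive version). -/
noncomputable def φswapAdd : ZMod 2 →+ Additive (MulAut (Multiplicative (ℤ × ℤ))) :=
  ZMod.lift 2 ⟨zmultiplesHom _ (Additive.ofMul (σswap : MulAut (Multiplicative (ℤ × ℤ)))),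
    by
      show (2 : ℤ) • Additive.ofMul (σswap : MulAut (Multiplicative (ℤ × ℤ))) = 0
      rw [← ofMul_zpow, σswap_sq]; rfl⟩

/-- The action of `ℤ/2ℤ` on `ℤ²` whose generator swaps the two coordinates. -/
noncomputable def φswap : Multiplicative (ZMod 2) →* MulAut (Multiplicative (ℤ × ℤ)) :=
  AddMonoidHom.toMultiplicativeLeft φswapAdd

/-- The group `Γ = ℤ² ⋊ ℤ/2ℤ`, the generator of `ℤ/2ℤ` acting by swapping
the two `ℤ`-coordinates. -/
noncomputable abbrev GammaSD := Multiplicative (ℤ × ℤ) ⋊[φswap] Multiplicative (ZMod 2)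

/-- The subgroup `{(a·k, b·m, id) : k, m ∈ ℤ}` of `Γ = ℤ² ⋊ ℤ/2ℤ`. -/
noncomputable def latticeSub (a b : ℤ) : Subgroup GammaSD :=
  Subgroup.map SemidirectProduct.inl
    (AddSubgroup.toSubgroup
      ((AddSubgroup.zmultiples a).prod (AddSubgroup.zmultiples b)))

lemma φswap_one : φswap (Multiplicative.ofAdd (1 : ZMod 2)) = (σswap : MulAut (Multiplicative (ℤ × ℤ))) := by
  show φswapAdd (1 : ZMod 2) = _
  have h : ((1 : ℤ) : ZMod 2) = (1 : ZMod 2) := by norm_num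
  unfold φswapAdd
  rw [← h, ZMod.lift_coe]
  show (1 : ℤ) • Additive.ofMul (σswap : MulAut (Multiplicative (ℤ × ℤ))) = _
  rw [one_zsmul]; rfl

lemma φswap_cases (s : Multiplicative (ZMod 2)) :
    φswap s = 1 ∨ φswap s = (σswap : MulAut (Multiplicative (ℤ × ℤ))) := by
  rcases (by decide : ∀ z : ZMod 2, z = 0 ∨ z = 1) s.toAdd with h | h
  · left
    have hs : s = Multiplicative.ofAdd (0 : ZMod 2) := by rw [← h]; rfl
    rw [hs]
    exact map_one φswap
  · right
    have hs : s = Multiplicative.ofAdd (1 : ZMod 2) := by rw [← h]; rfl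
    rw [hs, φswap_one]

lemma mem_latticeSub {a b : ℤ} {x : GammaSD} :
    x ∈ latticeSub a b ↔ a ∣ x.left.toAdd.1 ∧ b ∣ x.left.toAdd.2 ∧ x.right = 1 := by
  constructor
  · rintro ⟨y, hy, rfl⟩
    have hy' : Multiplicative.toAdd y ∈ (AddSubgroup.zmultiples a).prod (AddSubgroup.zmultiples b) := hy
    rw [AddSubgroup.mem_prod] at hy'
    exact ⟨(Int.mem_zmultiples_iff).mp hy'.1, (Int.mem_zmultiples_iff).mp hy'.2, rfl⟩
  · rintro ⟨h1, h2, h3⟩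
    refine ⟨x.left, ?_, ?_⟩
    · show Multiplicative.toAdd x.left ∈ (AddSubgroup.zmultiples a).prod (AddSubgroup.zmultiples b)
      rw [AddSubgroup.mem_prod]
      exact ⟨Int.mem_zmultiples_iff.mpr h1, Int.mem_zmultiples_iff.mpr h2⟩
    · ext <;> simp [h3]

lemma conj_left (g x : GammaSD) (hx : x.right = 1) :
    (g * x * g⁻¹).left = φswap g.right x.left := by
  rw [SemidirectProduct.mul_left, SemidirectProduct.mul_left, SemidirectProduct.mul_right,
    SemidirectProduct.inv_left, hx, mul_one, map_inv φswap g.right, MulAut.apply_inv_self,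
    mul_comm g.left, mul_inv_cancel_right]

lemma conj_right (g x : GammaSD) (hx : x.right = 1) : (g * x * g⁻¹).right = 1 := by
  rw [SemidirectProduct.mul_right, SemidirectProduct.mul_right, SemidirectProduct.inv_right,
    hx, mul_one, mul_inv_cancel]

lemma σswap_toAdd (y : Multiplicative (ℤ × ℤ)) :
    ((σswap : MulAut (Multiplicative (ℤ × ℤ))) y).toAdd = (y.toAdd.2, y.toAdd.1) := rfl

lemma latticeSub_normal (a : ℤ) : (latticeSub a a).Normal := by
  constructor
  intro x hx g
  rw [mem_latticeSub] at hx ⊢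
  obtain ⟨h1, h2, h3⟩ := hx
  refine ⟨?_, ?_, conj_right g x h3⟩ <;>
    rw [conj_left g x h3] <;>
    rcases φswap_cases g.right with h | h <;>
    simp [h, σswap_toAdd, h1, h2]

/-- For distinct primes `p, q` and `Γ_ℓ = {(p^ℓ k, q^ℓ m, id)} ⊆ ℤ² ⋊ ℤ/2ℤ`, the
normal core of `Γ_ℓ` in `Γ` is `C_ℓ = {((pq)^ℓ k, (pq)^ℓ m, id)}`. -/
theorem normalCore_latticeSub (p q : ℕ) (hp : p.Prime) (hq : q.Prime) (hpq : p ≠ q)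
    (ℓ : ℕ) :
    (latticeSub ((p : ℤ) ^ ℓ) ((q : ℤ) ^ ℓ)).normalCore =
      latticeSub (((p : ℤ) * q) ^ ℓ) (((p : ℤ) * q) ^ ℓ) := by
  have hco : IsCoprime ((p : ℤ) ^ ℓ) ((q : ℤ) ^ ℓ) := by
    apply IsCoprime.pow
    rw [Int.isCoprime_iff_gcd_eq_one, Int.gcd_natCast_natCast]
    exact (Nat.coprime_primes hp hq).mpr hpq
  apply le_antisymm
  · intro x hx
    have hx1 := (latticeSub ((p : ℤ) ^ ℓ) ((q : ℤ) ^ ℓ)).normalCore_le hx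
    have hx2 : SemidirectProduct.inr (Multiplicative.ofAdd (1 : ZMod 2)) * x *
        (SemidirectProduct.inr (Multiplicative.ofAdd (1 : ZMod 2)))⁻¹ ∈
        latticeSub ((p : ℤ) ^ ℓ) ((q : ℤ) ^ ℓ) := hx _
    rw [mem_latticeSub] at hx1 hx2 ⊢
    obtain ⟨h1, h2, h3⟩ := hx1
    rw [conj_left _ x h3, SemidirectProduct.right_inr, φswap_one, σswap_toAdd] at hx2
    obtain ⟨h4, h5, -⟩ := hx2
    refine ⟨?_, ?_, h3⟩ <;> rw [mul_pow]
    · exact hco.mul_dvd h1 h5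
    · exact hco.mul_dvd h4 h2
  · haveI := latticeSub_normal (((p : ℤ) * q) ^ ℓ)
    rw [Subgroup.normal_le_normalCore]
    intro x hx
    rw [mem_latticeSub] at hx ⊢
    obtain ⟨h1, h2, h3⟩ := hx
    rw [mul_pow] at h1 h2
    exact ⟨(dvd_mul_right _ _).trans h1, (dvd_mul_left _ _).trans h2, h3⟩
end

section
/- In the integer Heisenberg group Γ with coordinates (a,b,c) and prime p, the normal core in Γ of the subgroup Γ_ℓ = { (p^ℓ a, p^ℓ b, p^{2ℓ} c) : a,b,c ∈ ℤ } equals C_ℓ = { (p^{2ℓ} a, p^{2ℓ} b, p^{2ℓ} c) : a,b,c ∈ ℤ }. -/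
/-- The integer Heisenberg group, with coordinates `(a, b, c)`. -/
@[ext] structure Heis where
  a : ℤ
  b : ℤ
  c : ℤ

instance : Mul Heis := ⟨fun x y => ⟨x.a + y.a, x.b + y.b, x.c + y.c + x.a * y.b⟩⟩
instance : One Heis := ⟨⟨0, 0, 0⟩⟩
instance : Inv Heis := ⟨fun x => ⟨-x.a, -x.b, -x.c + x.a * x.b⟩⟩

lemma Heis.mul_def (x y : Heis) :
    x * y = ⟨x.a + y.a, x.b + y.b, x.c + y.c + x.a * y.b⟩ := rfl
lemma Heis.one_def : (1 : Heis) = ⟨0, 0, 0⟩ := rfl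
lemma Heis.inv_def (x : Heis) : x⁻¹ = ⟨-x.a, -x.b, -x.c + x.a * x.b⟩ := rfl

instance : Group Heis where
  mul_assoc x y z := by ext <;> simp [Heis.mul_def] <;> ring
  one_mul x := by ext <;> simp [Heis.mul_def, Heis.one_def]
  mul_one x := by ext <;> simp [Heis.mul_def, Heis.one_def]
  inv_mul_cancel x := by ext <;> simp [Heis.mul_def, Heis.one_def, Heis.inv_def] <;> ring

/-- The subgroup `Γ_ℓ = {(p^ℓ a, p^ℓ b, p^{2ℓ} c) : a, b, c ∈ ℤ}` of the Heisenberg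
group. -/
def heisGamma (p : ℕ) (ℓ : ℕ) : Subgroup Heis where
  carrier := {x | ∃ a b c : ℤ, x = ⟨(p : ℤ) ^ ℓ * a, (p : ℤ) ^ ℓ * b, (p : ℤ) ^ (2 * ℓ) * c⟩}
  one_mem' := ⟨0, 0, 0, by ext <;> simp [Heis.one_def]⟩
  mul_mem' := by
    rintro x y ⟨a, b, c, rfl⟩ ⟨a', b', c', rfl⟩
    exact ⟨a + a', b + b', c + c' + a * b', by ext <;> simp [Heis.mul_def] <;> ring⟩
  inv_mem' := by
    rintro x ⟨a, b, c, rfl⟩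
    exact ⟨-a, -b, -c + a * b, by ext <;> simp [Heis.inv_def] <;> ring⟩

/-- The subgroup `C_ℓ = {(p^{2ℓ} a, p^{2ℓ} b, p^{2ℓ} c) : a, b, c ∈ ℤ}` of the
Heisenberg group. -/
def heisCore (p : ℕ) (ℓ : ℕ) : Subgroup Heis where
  carrier := {x | ∃ a b c : ℤ,
    x = ⟨(p : ℤ) ^ (2 * ℓ) * a, (p : ℤ) ^ (2 * ℓ) * b, (p : ℤ) ^ (2 * ℓ) * c⟩}
  one_mem' := ⟨0, 0, 0, by ext <;> simp [Heis.one_def]⟩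
  mul_mem' := by
    rintro x y ⟨a, b, c, rfl⟩ ⟨a', b', c', rfl⟩
    exact ⟨a + a', b + b', c + c' + (p : ℤ) ^ (2 * ℓ) * (a * b'),
      by ext <;> simp [Heis.mul_def] <;> ring⟩
  inv_mem' := by
    rintro x ⟨a, b, c, rfl⟩
    exact ⟨-a, -b, -c + (p : ℤ) ^ (2 * ℓ) * (a * b),
      by ext <;> simp [Heis.inv_def] <;> ring⟩

instance heisCore_normal (p ℓ : ℕ) : (heisCore p ℓ).Normal := by
  constructor
  rintro x ⟨a, b, c, rfl⟩ g
  exact ⟨a, b, c + g.a * b - g.b * a, by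
    ext <;> simp [Heis.mul_def, Heis.inv_def] <;> ring⟩

lemma heisCore_le_heisGamma (p ℓ : ℕ) : heisCore p ℓ ≤ heisGamma p ℓ := by
  rintro x ⟨a, b, c, rfl⟩
  exact ⟨(p : ℤ) ^ ℓ * a, (p : ℤ) ^ ℓ * b, c, by ext <;> simp [two_mul, pow_add] <;> ring⟩

/-- In the integer Heisenberg group, the normal core of
`Γ_ℓ = {(p^ℓ a, p^ℓ b, p^{2ℓ} c)}` is `C_ℓ = {(p^{2ℓ} a, p^{2ℓ} b, p^{2ℓ} c)}`. -/
theorem heisGamma_normalCore (p : ℕ) (hp : p.Prime) (ℓ : ℕ) :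
    (heisGamma p ℓ).normalCore = heisCore p ℓ := by
  apply le_antisymm
  · intro x hx
    have h1 := hx 1
    have h2 := hx ⟨1, 0, 0⟩
    have h3 := hx ⟨0, 1, 0⟩
    simp only [heisGamma, Subgroup.mem_mk, Set.mem_setOf_eq, Heis.mul_def, Heis.inv_def,
      Heis.one_def] at h1 h2 h3
    obtain ⟨a1, b1, c1, e1⟩ := h1
    obtain ⟨a2, b2, c2, e2⟩ := h2
    obtain ⟨a3, b3, c3, e3⟩ := h3
    have e1a := congrArg Heis.a e1; have e1b := congrArg Heis.b e1
    have e1c := congrArg Heis.c e1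
    have e2c := congrArg Heis.c e2
    have e3c := congrArg Heis.c e3
    simp at e1a e1b e1c e2c e3c
    refine ⟨c1 - c3, c2 - c1, c1, ?_⟩
    ext <;> simp
    · linarith [e1c, e3c]
    · linarith [e1c, e2c]
    · linarith [e1c]
  · exact Subgroup.normal_le_normalCore.mpr (heisCore_le_heisGamma p ℓ)
end

section
/- Let γ be a permutation of a finite set X of cardinality n, let Y be a finite set with a surjection π : Y → X such that every fiber has exactly d elements, and let γ̃ be a permutation of Y with π ∘ γ̃ = γ ∘ π. Then for every cycle c̃ of γ̃, the length of c̃ equals α·|c| for some cycle c of γ and some integer 1 ≤ α ≤ d; consequently, every prime dividing the order of γ̃ but not the order of γ must divide one of the integers 2, …, d. -/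
/-- Let `γ` be a permutation of a finite set `X`, `π : Y → X` a surjection of finite
sets with all fibers of size `d`, and `γ̃` a permutation of `Y` with `π ∘ γ̃ = γ ∘ π`.
Then the cycle of `γ̃` through any point has length `α · |c|` where `c` is the cycle of
`γ` through its image and `1 ≤ α ≤ d`; consequently, every prime dividing the order of
`γ̃` but not the order of `γ` divides one of the integers `2, …, d`. -/
theorem lifted_perm_cycle_lengths {X Y : Type*} [Fintype X] [Fintype Y]
    (d : ℕ) (hd : 1 ≤ d) (π : Y → X) (hπ : Function.Surjective π)
    (hfib : ∀ x : X, Nat.card {y : Y // π y = x} = d)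
    (γ : Equiv.Perm X) (γ' : Equiv.Perm Y) (hcomm : ∀ y : Y, π (γ' y) = γ (π y)) :
    (∀ y : Y, ∃ α : ℕ, 1 ≤ α ∧ α ≤ d ∧
      Function.minimalPeriod (⇑γ') y = α * Function.minimalPeriod (⇑γ) (π y)) ∧
    ∀ r : ℕ, r.Prime → r ∣ orderOf γ' → ¬r ∣ orderOf γ →
      ∃ j ∈ Finset.Icc 2 d, r ∣ j := by
  have hsemi : Function.Semiconj π ⇑γ' ⇑γ := hcomm
  have hYper : ∀ z : Y, z ∈ Function.periodicPts ⇑γ' := fun z =>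
    Function.mem_periodicPts.2 ⟨orderOf γ', orderOf_pos γ', by
      simp [Function.IsPeriodicPt, Function.IsFixedPt, ← Equiv.Perm.coe_pow,
        pow_orderOf_eq_one]⟩
  have hXper : ∀ x : X, x ∈ Function.periodicPts ⇑γ := fun x =>
    Function.mem_periodicPts.2 ⟨orderOf γ, orderOf_pos γ, by
      simp [Function.IsPeriodicPt, Function.IsFixedPt, ← Equiv.Perm.coe_pow,
        pow_orderOf_eq_one]⟩
  have hMdvd : ∀ z : Y, Function.minimalPeriod (⇑γ') z ∣ orderOf γ' := fun z =>
    Function.IsPeriodicPt.minimalPeriod_dvd (by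
      simp [Function.IsPeriodicPt, Function.IsFixedPt, ← Equiv.Perm.coe_pow,
        pow_orderOf_eq_one])
  have hmdvd : ∀ x : X, Function.minimalPeriod (⇑γ) x ∣ orderOf γ := fun x =>
    Function.IsPeriodicPt.minimalPeriod_dvd (by
      simp [Function.IsPeriodicPt, Function.IsFixedPt, ← Equiv.Perm.coe_pow,
        pow_orderOf_eq_one])
  have key : ∀ y : Y, ∃ α : ℕ, 1 ≤ α ∧ α ≤ d ∧
      Function.minimalPeriod (⇑γ') y = α * Function.minimalPeriod (⇑γ) (π y) := by
    intro y
    set m := Function.minimalPeriod (⇑γ) (π y) with hm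
    set M := Function.minimalPeriod (⇑γ') y with hM
    have hMpos : 0 < M := Function.minimalPeriod_pos_of_mem_periodicPts (hYper y)
    have hmpos : 0 < m := Function.minimalPeriod_pos_of_mem_periodicPts (hXper (π y))
    have hproj : ∀ k : ℕ, π ((⇑γ')^[k] y) = (⇑γ)^[k] (π y) := fun k =>
      (hsemi.iterate_right k) y
    have hmM : m ∣ M := Function.IsPeriodicPt.minimalPeriod_dvd (by
      show (⇑γ)^[M] (π y) = π y
      rw [← hproj M, Function.iterate_minimalPeriod])
    obtain ⟨α, hα⟩ := hmM
    have hαpos : 0 < α := by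
      rcases Nat.eq_zero_or_pos α with h | h
      · subst h; simp at hα; omega
      · exact h
    refine ⟨α, hαpos, ?_, by rw [hα, mul_comm]⟩
    -- the α points γ'^[j*m] y, j < α, are distinct and lie in the fiber over π y
    have hfibmem : ∀ j : ℕ, π ((⇑γ')^[j * m] y) = π y := by
      intro j
      rw [hproj]
      exact (Function.isPeriodicPt_minimalPeriod (⇑γ) (π y)).const_mul j
    have hcancel : ∀ j1 j2 : Fin α, (j1 : ℕ) ≤ (j2 : ℕ) →
        (⇑γ')^[(j1 : ℕ) * m] y = (⇑γ')^[(j2 : ℕ) * m] y → j1 = j2 := by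
      intro j1 j2 hle hEq
      have h2 : ((j2 : ℕ)) * m = ((j2 : ℕ) - (j1 : ℕ)) * m + (j1 : ℕ) * m := by
        rw [← Nat.add_mul]; congr 1; omega
      have hcomm2 : (⇑γ')^[((j2 : ℕ) - (j1 : ℕ)) * m] ((⇑γ')^[(j1 : ℕ) * m] y)
          = (⇑γ')^[(j1 : ℕ) * m] ((⇑γ')^[((j2 : ℕ) - (j1 : ℕ)) * m] y) := by
        rw [← Function.iterate_add_apply, ← Function.iterate_add_apply, Nat.add_comm]
      have hstep : (⇑γ')^[(j1 : ℕ) * m] ((⇑γ')^[((j2 : ℕ) - (j1 : ℕ)) * m] y)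
          = (⇑γ')^[(j1 : ℕ) * m] y := by
        rw [← hcomm2, ← Function.iterate_add_apply, ← h2, ← hEq]
      have hfix : (⇑γ')^[((j2 : ℕ) - (j1 : ℕ)) * m] y = y :=
        (Function.Injective.iterate γ'.injective _) hstep
      have hdvd : M ∣ ((j2 : ℕ) - (j1 : ℕ)) * m :=
        Function.IsPeriodicPt.minimalPeriod_dvd hfix
      have hzero : ((j2 : ℕ) - (j1 : ℕ)) * m = 0 := by
        by_contra hne
        have hpos : 0 < ((j2 : ℕ) - (j1 : ℕ)) * m := Nat.pos_of_ne_zero hne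
        have hle' : M ≤ ((j2 : ℕ) - (j1 : ℕ)) * m := Nat.le_of_dvd hpos hdvd
        have hlt : ((j2 : ℕ) - (j1 : ℕ)) * m < α * m :=
          (Nat.mul_lt_mul_right hmpos).2 (by omega)
        rw [hα, mul_comm] at hle'
        omega
      have : (j2 : ℕ) - (j1 : ℕ) = 0 := by
        rcases Nat.mul_eq_zero.1 hzero with h | h
        · exact h
        · omega
      exact Fin.ext (by omega)
    have hinj : Function.Injective (fun j : Fin α =>
        (⟨(⇑γ')^[(j : ℕ) * m] y, hfibmem j⟩ : {z : Y // π z = π y})) := by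
      intro j1 j2 hEq
      simp only [Subtype.mk.injEq] at hEq
      rcases le_total (j1 : ℕ) (j2 : ℕ) with h | h
      · exact hcancel j1 j2 h hEq
      · exact (hcancel j2 j1 h hEq.symm).symm
    have hcard : α ≤ d := by
      have := Nat.card_le_card_of_injective _ hinj
      simpa [hfib (π y)] using this
    exact hcard
  refine ⟨key, ?_⟩
  intro r hr hrγ' hrγ
  have hexists : ∃ y : Y, r ∣ Function.minimalPeriod (⇑γ') y := by
    by_contra hcon
    push_neg at hcon
    obtain ⟨k, hk⟩ := hrγ'
    have hnpos : 0 < orderOf γ' := orderOf_pos γ'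
    have hkpos : 0 < k := by
      rcases Nat.eq_zero_or_pos k with h | h
      · rw [h, mul_zero] at hk; omega
      · exact h
    have hpow : γ' ^ k = 1 := by
      ext z
      have hcop : (Function.minimalPeriod (⇑γ') z).Coprime r :=
        ((Nat.Prime.coprime_iff_not_dvd hr).2 (hcon z)).symm
      have h1 : Function.minimalPeriod (⇑γ') z ∣ k * r := by
        rw [mul_comm]; exact hk ▸ hMdvd z
      have hdvd : Function.minimalPeriod (⇑γ') z ∣ k :=
        Nat.Coprime.dvd_of_dvd_mul_right hcop h1
      have : (⇑γ')^[k] z = z :=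
        ((Function.isPeriodicPt_minimalPeriod (⇑γ') z).trans_dvd hdvd)
      simpa [← Equiv.Perm.coe_pow] using this
    have hdvd' := orderOf_dvd_of_pow_eq_one hpow
    have hle := Nat.le_of_dvd hkpos hdvd'
    have : k < r * k := by nlinarith [hr.two_le]
    omega
  obtain ⟨y, hy⟩ := hexists
  obtain ⟨α, hα1, hαd, hαeq⟩ := key y
  have hrm : ¬ r ∣ Function.minimalPeriod (⇑γ) (π y) :=
    fun h => hrγ (h.trans (hmdvd (π y)))
  have hrα : r ∣ α := by
    rw [hαeq] at hy
    exact Nat.Coprime.dvd_of_dvd_mul_right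
      ((Nat.Prime.coprime_iff_not_dvd hr).2 hrm) hy
  refine ⟨α, Finset.mem_Icc.2 ⟨?_, hαd⟩, hrα⟩
  have h1 := Nat.le_of_dvd (by omega) hrα
  have h2 := hr.two_le
  omega
end
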